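/- Let α < 1 be real, let V : ℕ × ℕ → ℝ be weights, let (n_1,…,n_k) be positive integers with sum n and V(n,k) ≠ 0, let 1 ≤ r ≤ k, and let m ≥ 1. Then ∑_{k*=1}^{m} ∑_{s=k*}^{m} binom(m,s) · (∑_{partitions {B_1,…,B_{k*}} of {1,…,s} into k* blocks} ∏_{i=1}^{k*} (1−α)_{|B_i|−1↑}) · (∑_{(m_1,…,m_r)} ((m−s)!/(m_1!⋯m_r!)) · ∏_{j=1}^{r} (n_j − α)_{m_j↑}) · V(n+m, k+k*)/V(n,k) = ∑_{k*=1}^{m} (V(n+m, k+k*)/V(n,k)) · S_{m,k*}^{-1,-α, rα − (n_1+⋯+n_r)}, where the inner sum over (m_1,…,m_r) ranges over r-tuples of nonnegative integers with m_1 + ⋯ + m_r = m − s. -/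

import Mathlib

/-- Rising factorial `(x)_{n↑} = ∏_{i=0}^{n-1} (x + i)`. -/
noncomputable def risefac (x : ℝ) (n : ℕ) : ℝ := ∏ i ∈ Finset.range n, (x + i)

/-- Generalized Stirling number `S_{n,k}^{-1,-α} = (n!/k!) ∑ ∏_j (1-α)_{n_j-1↑}/n_j!`,
the sum over positive tuples `(n_1,…,n_k)` with sum `n`. -/
noncomputable def genStirling (α : ℝ) (n k : ℕ) : ℝ :=
  ((n.factorial : ℝ) / k.factorial) *
    ∑ f ∈ (Finset.Nat.antidiagonalTuple k n).filter (fun f => ∀ i, 0 < f i),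
      ∏ j, risefac (1 - α) (f j - 1) / (f j).factorial

/-- Non-central generalized Stirling number
`S_{n,k}^{-1,-α,γ} = ∑_{s=k}^n binom(n,s) S_{s,k}^{-1,-α} (−γ)_{n-s↑}`. -/
noncomputable def genStirlingNC (α γ : ℝ) (n k : ℕ) : ℝ :=
  ∑ s ∈ Finset.Icc k n, (n.choose s : ℝ) * genStirling α s k * risefac (-γ) (n - s)

/-- `P` is a partition of `{1,…,n}` (modeled as `Fin n`) into nonempty blocks. -/
def isSetPartition {n : ℕ} (P : Finset (Finset (Fin n))) : Prop :=
  ∅ ∉ P ∧ (∀ A ∈ P, ∀ B ∈ P, A ≠ B → Disjoint A B) ∧ P.sup id = Finset.univ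

instance {n : ℕ} (P : Finset (Finset (Fin n))) : Decidable (isSetPartition P) := by
  unfold isSetPartition; infer_instance

/-- The partitions of `{1,…,n}` into exactly `k` nonempty blocks. -/
def partitionsK (n k : ℕ) : Finset (Finset (Finset (Fin n))) :=
  Finset.univ.filter (fun P => isSetPartition P ∧ P.card = k)


@[simp] lemma risefac_zero (x : ℝ) : risefac x 0 = 1 := by simp [risefac]

lemma risefac_succ (x : ℝ) (n : ℕ) : risefac x (n + 1) = risefac x n * (x + n) := by
  simp [risefac, Finset.prod_range_succ]

/-- Vandermonde identity for rising factorials. -/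
lemma risefac_add (x y : ℝ) : ∀ t : ℕ,
    risefac (x + y) t = ∑ a ∈ Finset.range (t + 1),
      (t.choose a : ℝ) * risefac x a * risefac y (t - a)
  | 0 => by simp
  | t + 1 => by
    rw [risefac_succ, risefac_add x y t, Finset.sum_mul]
    have key : ∀ a ∈ Finset.range (t + 1),
        (t.choose a : ℝ) * risefac x a * risefac y (t - a) * (x + y + t)
          = ((t.choose a : ℝ) * risefac x (a + 1) * risefac y (t - a))
            + ((t.choose a : ℝ) * risefac x a * risefac y (t - a + 1)) := by
      intro a ha
      rw [Finset.mem_range] at ha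
      have ha' : a ≤ t := Nat.lt_succ_iff.mp ha
      have hc : ((t - a : ℕ) : ℝ) = (t : ℝ) - a := by
        have := Nat.cast_sub (R := ℝ) ha'
        simpa using this
      rw [risefac_succ, risefac_succ, hc]
      ring
    rw [Finset.sum_congr rfl key, Finset.sum_add_distrib]
    -- first sum: shift index
    have h1 : ∑ a ∈ Finset.range (t + 1), (t.choose a : ℝ) * risefac x (a + 1) * risefac y (t - a)
        = ∑ b ∈ Finset.range (t + 2), (t.choose (b - 1) : ℝ) * risefac x b *
            risefac y (t + 1 - b) * (if b = 0 then 0 else 1) := by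
      rw [Finset.sum_range_succ' (fun b => (t.choose (b - 1) : ℝ) * risefac x b *
            risefac y (t + 1 - b) * (if b = 0 then 0 else 1)) (t+1)]
      simp [Nat.succ_sub_succ]
    have h2 : ∑ a ∈ Finset.range (t + 1), (t.choose a : ℝ) * risefac x a * risefac y (t - a + 1)
        = ∑ a ∈ Finset.range (t + 2), (t.choose a : ℝ) * risefac x a * risefac y (t + 1 - a) := by
      rw [Finset.sum_range_succ (fun a => (t.choose a : ℝ) * risefac x a * risefac y (t + 1 - a))]
      simp only [Nat.choose_succ_self, Nat.cast_zero, zero_mul, mul_zero, zero_mul, add_zero]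
      apply Finset.sum_congr rfl
      intro a ha
      rw [Finset.mem_range] at ha
      congr 2
      omega
    rw [h1, h2, ← Finset.sum_add_distrib]
    apply Finset.sum_congr rfl
    intro b hb
    rcases Nat.eq_zero_or_pos b with hb0 | hb0
    · subst hb0; simp
    · have : b = (b - 1) + 1 := by omega
      rw [if_neg (by omega)]
      rw [mul_one]
      have hch : (t + 1).choose b = t.choose (b - 1) + t.choose b := by
        rw [this, Nat.choose_succ_succ, Nat.succ_sub_one]
      rw [hch]
      push_cast
      ring

lemma risefac_zero_pos (t : ℕ) (ht : 0 < t) : risefac 0 t = 0 :=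
  Finset.prod_eq_zero (Finset.mem_range.mpr ht) (by simp)

/-- Peel the first coordinate of a sum over `antidiagonalTuple (r+1) t`. -/
lemma adt_peel {M : Type*} [AddCommMonoid M] (r t : ℕ) (F : (Fin (r + 1) → ℕ) → M) :
    ∑ f ∈ Finset.Nat.antidiagonalTuple (r + 1) t, F f
      = ∑ a ∈ Finset.range (t + 1), ∑ f' ∈ Finset.Nat.antidiagonalTuple r (t - a),
          F (Fin.cons a f') := by
  rw [Finset.sum_sigma']
  refine (Finset.sum_nbij' (i := fun (p : Σ _ : ℕ, (Fin r → ℕ)) => Fin.cons p.1 p.2)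
    (j := fun f => (⟨f 0, Fin.tail f⟩ : Σ _ : ℕ, (Fin r → ℕ))) ?_ ?_ ?_ ?_ ?_).symm
  · rintro ⟨a, f'⟩ hp
    simp only [Finset.mem_sigma, Finset.mem_range, Finset.Nat.mem_antidiagonalTuple] at hp ⊢
    rw [Fin.sum_cons, hp.2]
    omega
  · intro f hf
    simp only [Finset.Nat.mem_antidiagonalTuple] at hf
    simp only [Finset.mem_sigma, Finset.mem_range, Finset.Nat.mem_antidiagonalTuple]
    rw [Fin.sum_univ_succ] at hf
    have : ∑ i, Fin.tail f i = ∑ i : Fin r, f i.succ := rfl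
    omega
  · rintro ⟨a, f'⟩ _
    simp [Fin.tail_cons]
  · intro f _
    simp [Fin.cons_self_tail]
  · rintro ⟨a, f'⟩ _; rfl
lemma risefac_multinomial : ∀ (r : ℕ) (x : Fin r → ℝ) (t : ℕ),
    (∑ f ∈ Finset.Nat.antidiagonalTuple r t,
      ((t.factorial : ℝ) / ∏ j, ((f j).factorial : ℝ)) * ∏ j, risefac (x j) (f j))
      = risefac (∑ j, x j) t
  | 0, x, 0 => by
      simp [Finset.Nat.antidiagonalTuple_zero_zero, risefac_zero]
  | 0, x, (t+1) => by
      rw [Finset.Nat.antidiagonalTuple_zero_succ]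
      simp only [Finset.sum_empty]
      rw [Finset.univ_eq_empty, Finset.sum_empty, risefac_zero_pos _ (Nat.succ_pos t)]
  | (r+1), x, t => by
      rw [adt_peel]
      have step : ∀ a ∈ Finset.range (t + 1),
          (∑ f' ∈ Finset.Nat.antidiagonalTuple r (t - a),
            ((t.factorial : ℝ) / ∏ j, (((Fin.cons a f' : Fin (r+1) → ℕ) j).factorial : ℝ)) *
              ∏ j, risefac (x j) ((Fin.cons a f' : Fin (r+1) → ℕ) j))
            = (t.choose a : ℝ) * risefac (x 0) a *
                risefac (∑ j : Fin r, x j.succ) (t - a) := by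
        intro a ha
        rw [Finset.mem_range, Nat.lt_succ_iff] at ha
        rw [← risefac_multinomial r (fun j => x j.succ) (t - a), Finset.mul_sum]
        apply Finset.sum_congr rfl
        intro f' _
        rw [Fin.prod_univ_succ, Fin.prod_univ_succ]
        simp only [Fin.cons_zero, Fin.cons_succ]
        have hfac : (t.factorial : ℝ) = (t.choose a : ℝ) * a.factorial * (t - a).factorial := by
          rw [← Nat.choose_mul_factorial_mul_factorial ha]
          push_cast
          ring
        rw [hfac]
        have h1 : ((a.factorial : ℝ)) ≠ 0 := Nat.cast_ne_zero.mpr (Nat.factorial_ne_zero a)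
        field_simp
      rw [Finset.sum_congr rfl step]
      rw [Fin.sum_univ_succ, risefac_add]

def fib {N k : ℕ} (c : Fin N → Fin k) (j : Fin k) : ℕ :=
  (Finset.univ.filter (fun i => c i = j)).card

lemma delta_reindex {k N : ℕ} (j0 : Fin k) (H : (Fin k → ℕ) → ℝ) :
    ∑ f' ∈ Finset.Nat.antidiagonalTuple k N, H (fun j => f' j + if j = j0 then 1 else 0)
      = ∑ f ∈ (Finset.Nat.antidiagonalTuple k (N + 1)).filter (fun f => f j0 ≠ 0), H f := by
  refine Finset.sum_nbij' (i := fun f' => fun j => f' j + if j = j0 then 1 else 0)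
    (j := fun f => fun j => f j - if j = j0 then 1 else 0) ?_ ?_ ?_ ?_ ?_
  · intro f' hf'
    rw [Finset.Nat.mem_antidiagonalTuple] at hf'
    simp only [Finset.mem_filter, Finset.Nat.mem_antidiagonalTuple]
    constructor
    · rw [Finset.sum_add_distrib, hf', Finset.sum_ite_eq' Finset.univ j0 (fun _ => 1)]
      simp
    · simp
  · intro f hf
    simp only [Finset.mem_filter, Finset.Nat.mem_antidiagonalTuple] at hf
    rw [Finset.Nat.mem_antidiagonalTuple]
    obtain ⟨hsum, hne⟩ := hf
    have h1 : ∑ j ∈ Finset.univ.erase j0, (f j - if j = j0 then 1 else 0)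
        = ∑ j ∈ Finset.univ.erase j0, f j := by
      apply Finset.sum_congr rfl
      intro j hj
      rw [if_neg (Finset.mem_erase.mp hj).1]
      simp
    have hpt : ∀ j, (f j - if j = j0 then 1 else 0) + (if j = j0 then 1 else 0) = f j := by
      intro j
      by_cases h : j = j0
      · subst h
        rw [if_pos rfl]
        omega
      · simp [h]
    have hs : (∑ j, ((f j - if j = j0 then 1 else 0) + if j = j0 then 1 else 0)) = ∑ j, f j :=
      Finset.sum_congr rfl (fun j _ => hpt j)
    rw [Finset.sum_add_distrib, Finset.sum_ite_eq' Finset.univ j0 (fun _ => 1)] at hs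
    simp only [Finset.mem_univ, if_pos] at hs
    show (∑ i, (f i - if i = j0 then 1 else 0)) = N
    omega
  · intro f' _
    funext j
    show f' j + (if j = j0 then 1 else 0) - (if j = j0 then 1 else 0) = f' j
    omega
  · intro f hf
    simp only [Finset.mem_filter] at hf
    obtain ⟨_, hne⟩ := hf
    funext j
    show f j - (if j = j0 then 1 else 0) + (if j = j0 then 1 else 0) = f j
    by_cases h : j = j0
    · subst h
      simp only [eq_self_iff_true, if_true]
      omega
    · simp [h]
  · intro f' _; rfl

lemma fiber_sum : ∀ (N k : ℕ) (g : Fin k → ℕ → ℝ),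
    (∑ c : Fin N → Fin k, ∏ j, g j (fib c j))
      = ∑ f ∈ Finset.Nat.antidiagonalTuple k N,
          ((N.factorial : ℝ) / ∏ j, ((f j).factorial : ℝ)) * ∏ j, g j (f j)
  | 0, k, g => by
      have hu : ∀ c : Fin 0 → Fin k, ∀ j, fib c j = 0 := by
        intro c j
        simp [fib]
      rw [Fintype.sum_eq_single (fun i => i.elim0) (fun c hc => absurd (funext fun i => i.elim0) hc)]
      rw [Finset.Nat.antidiagonalTuple_zero_right, Finset.sum_singleton]
      simp [hu]
  | (N+1), k, g => by
      have hfib : ∀ (j0 : Fin k) (c' : Fin N → Fin k) (j : Fin k),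
          fib (Fin.cons j0 c' : Fin (N+1) → Fin k) j = fib c' j + if j = j0 then 1 else 0 := by
        intro j0 c' j
        simp only [fib, Finset.card_filter, Fin.sum_univ_succ, Fin.cons_zero, Fin.cons_succ]
        rw [add_comm]
        congr 1
        by_cases h : j = j0
        · subst h; simp
        · rw [if_neg h, if_neg (fun hh => h hh.symm)]
      have hstep : ∀ j0 : Fin k,
          (∑ c' : Fin N → Fin k, ∏ j, g j (fib (Fin.cons j0 c' : Fin (N+1) → Fin k) j))
            = ∑ f ∈ (Finset.Nat.antidiagonalTuple k (N + 1)).filter (fun f => f j0 ≠ 0),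
                ((N.factorial : ℝ) / ∏ j, (((f j - if j = j0 then 1 else 0)).factorial : ℝ)) *
                  ∏ j, g j (f j) := by
        intro j0
        set H : (Fin k → ℕ) → ℝ := fun f =>
          ((N.factorial : ℝ) / ∏ j, (((f j - if j = j0 then 1 else 0)).factorial : ℝ)) *
            ∏ j, g j (f j) with hH
        calc (∑ c' : Fin N → Fin k, ∏ j, g j (fib (Fin.cons j0 c' : Fin (N+1) → Fin k) j))
            = ∑ c' : Fin N → Fin k, ∏ j, g j (fib c' j + if j = j0 then 1 else 0) := by
              simp only [hfib]
          _ = ∑ f' ∈ Finset.Nat.antidiagonalTuple k N,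
                ((N.factorial : ℝ) / ∏ j, ((f' j).factorial : ℝ)) *
                  ∏ j, g j (f' j + if j = j0 then 1 else 0) :=
              fiber_sum N k (fun j t => g j (t + if j = j0 then 1 else 0))
          _ = ∑ f' ∈ Finset.Nat.antidiagonalTuple k N,
                H (fun j => f' j + if j = j0 then 1 else 0) := by
              apply Finset.sum_congr rfl
              intro f' _
              have harg : ∀ j : Fin k,
                  f' j + (if j = j0 then 1 else 0) - (if j = j0 then 1 else 0) = f' j := by
                intro j; omega
              simp only [hH, harg]
          _ = ∑ f ∈ (Finset.Nat.antidiagonalTuple k (N + 1)).filter (fun f => f j0 ≠ 0), H f :=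
              delta_reindex j0 H
      have hterm : ∀ j0 : Fin k, ∀ f ∈ Finset.Nat.antidiagonalTuple k (N + 1),
          (if f j0 ≠ 0 then
            ((N.factorial : ℝ) / ∏ j, (((f j - if j = j0 then 1 else 0)).factorial : ℝ)) *
              ∏ j, g j (f j) else 0)
            = (f j0 : ℝ) * ((N.factorial : ℝ) / ∏ j, ((f j).factorial : ℝ)) * ∏ j, g j (f j) := by
        intro j0 f _
        by_cases h : f j0 = 0
        · simp [h]
        · rw [if_pos h]
          have hprod : (f j0 : ℝ) * ∏ j, (((f j - if j = j0 then 1 else 0)).factorial : ℝ)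
              = ∏ j, ((f j).factorial : ℝ) := by
            rw [← Finset.mul_prod_erase Finset.univ
                  (fun j => (((f j - if j = j0 then 1 else 0)).factorial : ℝ)) (Finset.mem_univ j0),
                ← Finset.mul_prod_erase Finset.univ
                  (fun j => ((f j).factorial : ℝ)) (Finset.mem_univ j0)]
            have h2 : ∀ j ∈ Finset.univ.erase j0,
                (((f j - if j = j0 then 1 else 0)).factorial : ℝ) = ((f j).factorial : ℝ) := by
              intro j hj
              rw [if_neg (Finset.mem_erase.mp hj).1]
              simp
            rw [Finset.prod_congr rfl h2, ← mul_assoc, if_pos rfl]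
            congr 1
            rw [← Nat.cast_mul, Nat.mul_factorial_pred h]
          have hne2 : (∏ j, (((f j - if j = j0 then 1 else 0)).factorial : ℝ)) ≠ 0 := by
            apply Finset.prod_ne_zero_iff.mpr
            intro j _
            exact Nat.cast_ne_zero.mpr (Nat.factorial_ne_zero _)
          rw [← hprod]
          field_simp
      calc (∑ c : Fin (N+1) → Fin k, ∏ j, g j (fib c j))
          = ∑ p : Fin k × (Fin N → Fin k), ∏ j, g j (fib (Fin.cons p.1 p.2 : Fin (N+1) → Fin k) j) := by
            rw [← Equiv.sum_comp (Fin.consEquiv (fun _ => Fin k))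
              (fun c => ∏ j, g j (fib c j))]
            rfl
        _ = ∑ j0 : Fin k, ∑ c' : Fin N → Fin k,
              ∏ j, g j (fib (Fin.cons j0 c' : Fin (N+1) → Fin k) j) := Fintype.sum_prod_type _
        _ = ∑ j0 : Fin k, ∑ f ∈ (Finset.Nat.antidiagonalTuple k (N + 1)).filter (fun f => f j0 ≠ 0),
              ((N.factorial : ℝ) / ∏ j, (((f j - if j = j0 then 1 else 0)).factorial : ℝ)) *
                ∏ j, g j (f j) := Finset.sum_congr rfl (fun j0 _ => hstep j0)
        _ = ∑ j0 : Fin k, ∑ f ∈ Finset.Nat.antidiagonalTuple k (N + 1),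
              (f j0 : ℝ) * ((N.factorial : ℝ) / ∏ j, ((f j).factorial : ℝ)) * ∏ j, g j (f j) := by
            apply Finset.sum_congr rfl
            intro j0 _
            rw [Finset.sum_filter]
            exact Finset.sum_congr rfl (hterm j0)
        _ = ∑ f ∈ Finset.Nat.antidiagonalTuple k (N + 1),
              (∑ j0 : Fin k, (f j0 : ℝ)) * ((N.factorial : ℝ) / ∏ j, ((f j).factorial : ℝ)) *
                ∏ j, g j (f j) := by
            rw [Finset.sum_comm]
            apply Finset.sum_congr rfl
            intro f _
            rw [← Finset.sum_mul, ← Finset.sum_mul]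
        _ = ∑ f ∈ Finset.Nat.antidiagonalTuple k (N + 1),
              (((N+1).factorial : ℝ) / ∏ j, ((f j).factorial : ℝ)) * ∏ j, g j (f j) := by
            apply Finset.sum_congr rfl
            intro f hf
            rw [Finset.Nat.mem_antidiagonalTuple] at hf
            have hc : (∑ j0 : Fin k, (f j0 : ℝ)) = ((N+1 : ℕ) : ℝ) := by
              rw [← Nat.cast_sum, hf]
            rw [hc, Nat.factorial_succ]
            push_cast
            ring
def fibF {s K : ℕ} (c : Fin s → Fin K) (j : Fin K) : Finset (Fin s) :=
  Finset.univ.filter (fun i => c i = j)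

lemma fibF_mem_of_image {s K : ℕ} {c : Fin s → Fin K} {P : Finset (Finset (Fin s))}
    (hc : Finset.image (fibF c) Finset.univ = P) (j : Fin K) : fibF c j ∈ P :=
  hc ▸ Finset.mem_image_of_mem _ (Finset.mem_univ j)

lemma fibF_nonempty {s K : ℕ} {c : Fin s → Fin K} {P : Finset (Finset (Fin s))}
    (hc : Finset.image (fibF c) Finset.univ = P) (hP0 : ∅ ∉ P) (j : Fin K) :
    (fibF c j).Nonempty := by
  rw [Finset.nonempty_iff_ne_empty]
  intro he
  exact hP0 (he ▸ fibF_mem_of_image hc j)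

lemma fibF_injective {s K : ℕ} {c : Fin s → Fin K} {P : Finset (Finset (Fin s))}
    (hc : Finset.image (fibF c) Finset.univ = P) (hP0 : ∅ ∉ P) :
    Function.Injective (fibF c) := by
  intro j j' hjj
  obtain ⟨i, hi⟩ := fibF_nonempty hc hP0 j
  have hi' : i ∈ fibF c j' := by rw [← hjj]; exact hi
  have h1 : c i = j := (Finset.mem_filter.mp hi).2
  have h2 : c i = j' := (Finset.mem_filter.mp hi').2
  rw [← h1, h2]

noncomputable def toEquiv {s K : ℕ} (P : Finset (Finset (Fin s))) (hP0 : ∅ ∉ P)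
    (hcard : P.card = K) (c : Fin s → Fin K)
    (hc : Finset.image (fibF c) Finset.univ = P) : Fin K ≃ {A // A ∈ P} :=
  Equiv.ofBijective (fun j => ⟨fibF c j, fibF_mem_of_image hc j⟩)
    (by
      rw [Fintype.bijective_iff_injective_and_card]
      constructor
      · intro j j' hjj
        rw [Subtype.ext_iff] at hjj
        exact fibF_injective hc hP0 hjj
      · simp [Fintype.card_coe, hcard])

lemma existsUnique_block {s : ℕ} {P : Finset (Finset (Fin s))}
    (hdis : ∀ A ∈ P, ∀ B ∈ P, A ≠ B → Disjoint A B) (hsup : P.sup id = Finset.univ)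
    (i : Fin s) : ∃! A, A ∈ P ∧ i ∈ A := by
  have hi : i ∈ P.sup id := hsup ▸ Finset.mem_univ i
  rw [Finset.mem_sup] at hi
  obtain ⟨A, hA, hiA⟩ := hi
  refine ⟨A, ⟨hA, hiA⟩, ?_⟩
  rintro B ⟨hB, hiB⟩
  by_contra hne
  exact Finset.disjoint_left.mp (hdis B hB A hA hne) hiB hiA

noncomputable def fromEquiv {s K : ℕ} (P : Finset (Finset (Fin s)))
    (hex : ∀ i, ∃! A, A ∈ P ∧ i ∈ A) (e : Fin K ≃ {A // A ∈ P}) : Fin s → Fin K :=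
  fun i => e.symm ⟨P.choose (fun A => i ∈ A) (hex i), Finset.choose_mem (fun A => i ∈ A) P (hex i)⟩

lemma blockOf_eq {s : ℕ} {P : Finset (Finset (Fin s))}
    (hex : ∀ i, ∃! A, A ∈ P ∧ i ∈ A) {i : Fin s} {A : Finset (Fin s)}
    (hA : A ∈ P) (hiA : i ∈ A) : P.choose (fun A => i ∈ A) (hex i) = A :=
  (hex i).unique ⟨Finset.choose_mem (fun A => i ∈ A) P (hex i),
    Finset.choose_property (fun A => i ∈ A) P (hex i)⟩ ⟨hA, hiA⟩

lemma fibF_fromEquiv {s K : ℕ} (P : Finset (Finset (Fin s)))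
    (hex : ∀ i, ∃! A, A ∈ P ∧ i ∈ A) (e : Fin K ≃ {A // A ∈ P}) (j : Fin K) :
    fibF (fromEquiv P hex e) j = (e j : Finset (Fin s)) := by
  ext i
  simp only [fibF, Finset.mem_filter, Finset.mem_univ, true_and, fromEquiv,
    Equiv.symm_apply_eq]
  constructor
  · intro h
    rw [← h]
    exact (Finset.choose_property (fun A => i ∈ A) P (hex i) : _)
  · intro h
    rw [Subtype.ext_iff]
    exact blockOf_eq hex (e j).2 h

lemma image_fromEquiv {s K : ℕ} (P : Finset (Finset (Fin s)))
    (hex : ∀ i, ∃! A, A ∈ P ∧ i ∈ A) (e : Fin K ≃ {A // A ∈ P}) :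
    Finset.image (fibF (fromEquiv P hex e)) Finset.univ = P := by
  ext A
  simp only [Finset.mem_image, Finset.mem_univ, true_and]
  constructor
  · rintro ⟨j, rfl⟩
    rw [fibF_fromEquiv]
    exact (e j).2
  · intro hA
    exact ⟨e.symm ⟨A, hA⟩, by rw [fibF_fromEquiv, Equiv.apply_symm_apply]⟩

lemma card_fiber_partition {s K : ℕ} (P : Finset (Finset (Fin s)))
    (hP : P ∈ partitionsK s K) :
    ((Finset.univ : Finset (Fin s → Fin K)).filter
      (fun c => Finset.image (fibF c) Finset.univ = P)).card = K.factorial := by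
  rw [partitionsK, Finset.mem_filter] at hP
  obtain ⟨-, ⟨hP0, hdis, hsup⟩, hcard⟩ := hP
  have hex := existsUnique_block hdis hsup
  have hcardK : Fintype.card {A // A ∈ P} = K := by rw [Fintype.card_coe, hcard]
  have hcEq : Fintype.card (Fin K ≃ {A // A ∈ P}) = K.factorial := by
    rw [Fintype.card_equiv (Fintype.equivOfCardEq (by simp [hcardK]))]
    simp
  rw [← hcEq, ← Finset.card_univ]
  apply Finset.card_bij'
    (i := fun c hc => toEquiv P hP0 hcard c (Finset.mem_filter.mp hc).2)
    (j := fun e _ => fromEquiv P hex e)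
  · intro c hc
    exact Finset.mem_univ _
  · intro c hc
    funext i
    have h1 : fibF c (c i) ∈ P := fibF_mem_of_image (Finset.mem_filter.mp hc).2 (c i)
    have h2 : i ∈ fibF c (c i) := by simp [fibF]
    show (toEquiv P hP0 hcard c _).symm ⟨P.choose (fun A => i ∈ A) (hex i), _⟩ = c i
    rw [Equiv.symm_apply_eq]
    exact Subtype.ext (blockOf_eq hex h1 h2)
  · intro e _
    apply Equiv.ext
    intro j
    apply Subtype.ext
    show fibF (fromEquiv P hex e) j = (e j : Finset (Fin s))
    exact fibF_fromEquiv P hex e j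
  · intro e _
    rw [Finset.mem_filter]
    exact ⟨Finset.mem_univ _, image_fromEquiv P hex e⟩

/-- Grouping functions by their fiber partition. -/
lemma partition_grouping (s K : ℕ) (g : ℕ → ℝ) (hg : g 0 = 0) :
    (∑ c : Fin s → Fin K, ∏ j, g (fib c j))
      = (K.factorial : ℝ) * ∑ P ∈ partitionsK s K, ∏ A ∈ P, g A.card := by
  classical
  -- restrict to c whose fiber partition lies in partitionsK
  have hmem : ∀ c : Fin s → Fin K, (∏ j, g (fib c j)) ≠ 0 →
      Finset.image (fibF c) Finset.univ ∈ partitionsK s K := by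
    intro c hne
    have hfib : ∀ j, (fibF c j).Nonempty := by
      intro j
      rw [Finset.nonempty_iff_ne_empty]
      intro he
      apply hne
      apply Finset.prod_eq_zero (Finset.mem_univ j)
      have : fib c j = 0 := Finset.card_eq_zero.mpr he
      rw [this, hg]
    rw [partitionsK, Finset.mem_filter]
    refine ⟨Finset.mem_univ _, ⟨?_, ?_, ?_⟩, ?_⟩
    · intro h0
      rw [Finset.mem_image] at h0
      obtain ⟨j, -, hj⟩ := h0
      exact Finset.not_nonempty_empty (hj ▸ hfib j)
    · intro A hA B hB hAB
      rw [Finset.mem_image] at hA hB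
      obtain ⟨j, -, rfl⟩ := hA
      obtain ⟨j', -, rfl⟩ := hB
      rw [Finset.disjoint_left]
      intro i hi hi'
      exact hAB (by rw [← (Finset.mem_filter.mp hi).2, ← (Finset.mem_filter.mp hi').2])
    · apply Finset.eq_univ_iff_forall.mpr
      intro i
      rw [Finset.mem_sup]
      exact ⟨fibF c (c i), Finset.mem_image_of_mem _ (Finset.mem_univ _), by simp [fibF]⟩
    · rw [Finset.card_image_of_injective _ ?_]
      · exact Finset.card_fin K
      · exact fibF_injective rfl (fun h0 => Finset.not_nonempty_empty
          (by obtain ⟨j, -, hj⟩ := Finset.mem_image.mp h0; exact hj ▸ hfib j))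
  have key : ∀ P ∈ partitionsK s K, (∑ c ∈ Finset.univ.filter
      (fun c : Fin s → Fin K => Finset.image (fibF c) Finset.univ = P), ∏ j, g (fib c j))
      = (K.factorial : ℝ) * ∏ A ∈ P, g A.card := by
    intro P hP
    have hP0 : ∅ ∉ P := (Finset.mem_filter.mp hP).2.1.1
    have hconst : ∀ c ∈ Finset.univ.filter
        (fun c : Fin s → Fin K => Finset.image (fibF c) Finset.univ = P),
        (∏ j, g (fib c j)) = ∏ A ∈ P, g A.card := by
      intro c hc
      have hc2 := (Finset.mem_filter.mp hc).2
      rw [← hc2, Finset.prod_image (fun x _ y _ h => fibF_injective hc2 hP0 h)]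
      rfl
    rw [Finset.sum_congr rfl hconst, Finset.sum_const, card_fiber_partition P hP,
      nsmul_eq_mul]
  have h1 : (∑ c : Fin s → Fin K, ∏ j, g (fib c j))
      = ∑ c ∈ Finset.univ.filter
          (fun c : Fin s → Fin K => Finset.image (fibF c) Finset.univ ∈ partitionsK s K),
          ∏ j, g (fib c j) :=
    (Finset.sum_filter_of_ne (fun c _ hne => hmem c hne)).symm
  rw [h1, ← Finset.sum_fiberwise_of_maps_to (fun c hc => (Finset.mem_filter.mp hc).2)
    (fun c => ∏ j, g (fib c j))]
  rw [Finset.mul_sum]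
  apply Finset.sum_congr rfl
  intro P hP
  have hff : (Finset.univ.filter
        (fun c : Fin s → Fin K => Finset.image (fibF c) Finset.univ ∈ partitionsK s K)).filter
        (fun c => Finset.image (fibF c) Finset.univ = P)
      = Finset.univ.filter (fun c : Fin s → Fin K => Finset.image (fibF c) Finset.univ = P) := by
    rw [Finset.filter_filter]
    apply Finset.filter_congr
    intro c _
    exact ⟨fun h => h.2, fun h => ⟨h ▸ hP, h⟩⟩
  rw [hff, key P hP]

/-- Probability that the `m` new customers avoid a given subset of `k − r` old tables, for a
Gibbs partition of type `α`: the sum over the number `k*` of new tables, the number `s` of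
customers at new tables, the partitions of those `s` customers, and the allocations of the
remaining `m − s` customers among the first `r` old tables, equals
`∑_{k*=1}^m (V(n+m,k+k*)/V(n,k)) S_{m,k*}^{-1,-α, rα−(n_1+⋯+n_r)}`. -/
theorem gibbs_avoid_old_tables (α : ℝ) (hα : α < 1) (V : ℕ → ℕ → ℝ)
    (k : ℕ) (nvec : Fin k → ℕ) (hpos : ∀ j, 0 < nvec j)
    (n : ℕ) (hsum : ∑ j, nvec j = n) (hVn : V n k ≠ 0)
    (r : ℕ) (hr1 : 1 ≤ r) (hrk : r ≤ k) (m : ℕ) (hm : 1 ≤ m) :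
    ∑ kstar ∈ Finset.Icc 1 m, ∑ s ∈ Finset.Icc kstar m,
        (m.choose s : ℝ) *
          (∑ P ∈ partitionsK s kstar, ∏ A ∈ P, risefac (1 - α) (A.card - 1)) *
          (∑ f ∈ Finset.Nat.antidiagonalTuple r (m - s),
            (((m - s).factorial : ℝ) / ∏ j, ((f j).factorial : ℝ)) *
              ∏ j : Fin r, risefac ((nvec (Fin.castLE hrk j) : ℝ) - α) (f j)) *
          (V (n + m) (k + kstar) / V n k)
      = ∑ kstar ∈ Finset.Icc 1 m,
          (V (n + m) (k + kstar) / V n k) *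
            genStirlingNC α (r * α - ∑ j : Fin r, (nvec (Fin.castLE hrk j) : ℝ)) m kstar := by
  have partSum : ∀ (s K : ℕ),
      (∑ P ∈ partitionsK s K, ∏ A ∈ P, risefac (1 - α) (A.card - 1))
        = genStirling α s K := by
    intro s K
    set g : ℕ → ℝ := fun t => if t = 0 then 0 else risefac (1 - α) (t - 1) with hgdef
    have hg0 : g 0 = 0 := by simp [hgdef]
    have hKfac : ((K.factorial : ℝ)) ≠ 0 := Nat.cast_ne_zero.mpr (Nat.factorial_ne_zero K)
    have hKs : (K.factorial : ℝ) * ((s.factorial : ℝ) / (K.factorial : ℝ)) = s.factorial := by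
      field_simp
    have hsum2 : (∑ P ∈ partitionsK s K, ∏ A ∈ P, risefac (1 - α) (A.card - 1))
        = ∑ P ∈ partitionsK s K, ∏ A ∈ P, g A.card := by
      apply Finset.sum_congr rfl
      intro P hP
      apply Finset.prod_congr rfl
      intro A hA
      have h0 : A.card ≠ 0 := by
        intro h
        exact (Finset.mem_filter.mp hP).2.1.1 (Finset.card_eq_zero.mp h ▸ hA)
      rw [hgdef]
      simp only [h0, if_false]
    apply mul_left_cancel₀ hKfac
    rw [hsum2, ← partition_grouping s K g hg0]
    calc (∑ c : Fin s → Fin K, ∏ j, g (fib c j))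
        = ∑ f ∈ Finset.Nat.antidiagonalTuple K s,
            ((s.factorial : ℝ) / ∏ j, ((f j).factorial : ℝ)) * ∏ j, g (f j) :=
          fiber_sum s K (fun _ t => g t)
      _ = ∑ f ∈ (Finset.Nat.antidiagonalTuple K s).filter (fun f => ∀ i, 0 < f i),
            ((s.factorial : ℝ) / ∏ j, ((f j).factorial : ℝ)) * ∏ j, g (f j) := by
          refine (Finset.sum_filter_of_ne ?_).symm
          intro f _ hne i
          rcases Nat.eq_zero_or_pos (f i) with h0 | h0
          · exfalso
            apply hne
            have hz : (∏ j : Fin K, g (f j)) = 0 :=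
              Finset.prod_eq_zero (Finset.mem_univ i) (by simp [hgdef, h0])
            rw [hz, mul_zero]
          · exact h0
      _ = (K.factorial : ℝ) * genStirling α s K := by
          rw [genStirling, ← mul_assoc, hKs, Finset.mul_sum]
          apply Finset.sum_congr rfl
          intro f hf
          have hpos := (Finset.mem_filter.mp hf).2
          have hgf : ∀ j : Fin K, g (f j) = risefac (1 - α) (f j - 1) := by
            intro j
            rw [hgdef]
            simp only [Nat.pos_iff_ne_zero.mp (hpos j), if_false]
          rw [Finset.prod_congr rfl (fun j _ => hgf j)]
          rw [show (∏ j : Fin K, (risefac (1 - α) (f j - 1) / (f j).factorial : ℝ))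
              = (∏ j : Fin K, (risefac (1 - α) (f j - 1) : ℝ)) /
                  (∏ j : Fin K, ((f j).factorial : ℝ)) from Finset.prod_div_distrib _ _]
          ring
  have hmix : ∀ s' : ℕ,
      (∑ f ∈ Finset.Nat.antidiagonalTuple r (m - s'),
        (((m - s').factorial : ℝ) / ∏ j, ((f j).factorial : ℝ)) *
          ∏ j : Fin r, risefac ((nvec (Fin.castLE hrk j) : ℝ) - α) (f j))
        = risefac (-(r * α - ∑ j : Fin r, (nvec (Fin.castLE hrk j) : ℝ))) (m - s') := by
    intro s'
    rw [risefac_multinomial r (fun j => (nvec (Fin.castLE hrk j) : ℝ) - α) (m - s')]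
    congr 1
    rw [Finset.sum_sub_distrib, Finset.sum_const, Finset.card_univ, Fintype.card_fin,
      nsmul_eq_mul]
    ring
  apply Finset.sum_congr rfl
  intro kstar _
  rw [genStirlingNC, Finset.mul_sum]
  apply Finset.sum_congr rfl
  intro s' _
  rw [partSum s' kstar, hmix s']
  ring
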